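/- The regular contingency logic R^Δ is strongly complete with respect to the class of quasi-filters: every R^Δ-consistent set of formulas is satisfiable at some state of some neighborhood model whose neighborhood function at every state is closed under supersets and closed under binary intersections. -/

import Mathlib

/-- The language L(Δ) of contingency logic: φ ::= p | ¬φ | (φ ∧ φ) | Δφ. -/
inductive Formula (P : Type) : Type
  | atom : P → Formula P
  | neg : Formula P → Formula P
  | and : Formula P → Formula P → Formula P
  | delta : Formula P → Formula P

namespace Formula

variable {P : Type}

/-- φ ∨ ψ abbreviates ¬(¬φ ∧ ¬ψ). -/
def or (φ ψ : Formula P) : Formula P := neg (and (neg φ) (neg ψ))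

/-- φ → ψ abbreviates ¬(φ ∧ ¬ψ). -/
def imp (φ ψ : Formula P) : Formula P := neg (and φ (neg ψ))

/-- φ ↔ ψ abbreviates (φ → ψ) ∧ (ψ → φ). -/
def iffF (φ ψ : Formula P) : Formula P := and (imp φ ψ) (imp ψ φ)

end Formula

/-- ⊤ : a fixed tautology (p ∨ ¬p for a fixed propositional variable p). -/
noncomputable def Formula.top (P : Type) [Nonempty P] : Formula P :=
  Formula.or (Formula.atom (Classical.arbitrary P))
    (Formula.neg (Formula.atom (Classical.arbitrary P)))

/-- A neighborhood model ⟨S, N, V⟩: a nonempty set of states `S`, a neighborhood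
function `N : S → P(P(S))` and a valuation `V`. -/
structure NbhdModel (P : Type) where
  S : Type
  nonempty : Nonempty S
  N : S → Set (Set S)
  V : P → Set S

/-- The truth set ⟦φ⟧ of a formula in a neighborhood model; the clause for `Δφ` says
that a state `s` satisfies `Δφ` iff ⟦φ⟧ ∈ N(s) or S ∖ ⟦φ⟧ ∈ N(s). -/
def NbhdModel.truthSet {P : Type} (M : NbhdModel P) : Formula P → Set M.S
  | .atom p => M.V p
  | .neg φ => (M.truthSet φ)ᶜ
  | .and φ ψ => M.truthSet φ ∩ M.truthSet ψ
  | .delta φ => {s | M.truthSet φ ∈ M.N s ∨ (M.truthSet φ)ᶜ ∈ M.N s}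

/-- Satisfaction: M,s ⊨ φ. -/
def NbhdModel.sat {P : Type} (M : NbhdModel P) (s : M.S) (φ : Formula P) : Prop :=
  s ∈ M.truthSet φ

/-- Frame property (m): closure under supersets. -/
def SupersetClosed {S : Type} (N : S → Set (Set S)) : Prop :=
  ∀ s : S, ∀ X Y : Set S, X ∈ N s → X ⊆ Y → Y ∈ N s

/-- Frame property (c): closure under binary intersections. -/
def InterClosed {S : Type} (N : S → Set (Set S)) : Prop :=
  ∀ s : S, ∀ X Y : Set S, X ∈ N s → Y ∈ N s → X ∩ Y ∈ N s

/-- Frame property (n): contains the unit. -/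
def ContainsUnit {S : Type} (N : S → Set (Set S)) : Prop :=
  ∀ s : S, (Set.univ : Set S) ∈ N s

/-- Frame property (z): closure under complements. -/
def ComplClosed {S : Type} (N : S → Set (Set S)) : Prop :=
  ∀ s : S, ∀ X : Set S, X ∈ N s → Xᶜ ∈ N s

/-- The supplementation of a neighborhood function:
`N⁺(s) = {X ⊆ S : Y ⊆ X for some Y ∈ N(s)}`. -/
def suppN {S : Type} (N : S → Set (Set S)) (s : S) : Set (Set S) :=
  {X | ∃ Y ∈ N s, Y ⊆ X}

/-- `φ` is a substitution instance of a propositional tautology: every Boolean valuation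
of formulas that respects `¬` and `∧` (treating atoms and Δ-formulas as atomic) makes
`φ` true. -/
def Tautology {P : Type} (φ : Formula P) : Prop :=
  ∀ v : Formula P → Bool,
    (∀ ψ, v (Formula.neg ψ) = !(v ψ)) →
    (∀ ψ χ, v (Formula.and ψ χ) = (v ψ && v χ)) →
    v φ = true

/-- Derivability in the system E^Δ (TAUT + ΔEqu + MP + REΔ) extended with the
additional axioms in `Ax`. -/
inductive Deriv {P : Type} (Ax : Set (Formula P)) : Formula P → Prop
  | ax {φ} (h : φ ∈ Ax) : Deriv Ax φ
  | taut {φ} (h : Tautology φ) : Deriv Ax φ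
  | equ (φ) : Deriv Ax (Formula.iffF (Formula.delta φ) (Formula.delta (Formula.neg φ)))
  | mp {φ ψ} (h1 : Deriv Ax (Formula.imp φ ψ)) (h2 : Deriv Ax φ) : Deriv Ax ψ
  | re {φ ψ} (h : Deriv Ax (Formula.iffF φ ψ)) :
      Deriv Ax (Formula.iffF (Formula.delta φ) (Formula.delta ψ))

/-- Derivability of `φ` from the set of premises `Γ` in the system E^Δ + `Ax`. -/
inductive DerivFrom {P : Type} (Ax Γ : Set (Formula P)) : Formula P → Prop
  | mem {φ} (h : φ ∈ Γ) : DerivFrom Ax Γ φ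
  | thm {φ} (h : Deriv Ax φ) : DerivFrom Ax Γ φ
  | mp {φ ψ} (h1 : DerivFrom Ax Γ (Formula.imp φ ψ)) (h2 : DerivFrom Ax Γ φ) :
      DerivFrom Ax Γ ψ

/-- `Γ` is consistent in the system E^Δ + `Ax`: no contradiction is derivable from `Γ`. -/
def Consistent {P : Type} (Ax Γ : Set (Formula P)) : Prop :=
  ¬ ∃ φ : Formula P, DerivFrom Ax Γ φ ∧ DerivFrom Ax Γ (Formula.neg φ)

/-- The axiom ΔM: all instances of Δφ → Δ(φ ∨ ψ) ∨ Δ(¬φ ∨ χ). -/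
def AxDeltaM {P : Type} : Set (Formula P) :=
  {f | ∃ φ ψ χ : Formula P,
     f = Formula.imp (Formula.delta φ)
           (Formula.or (Formula.delta (Formula.or φ ψ))
                       (Formula.delta (Formula.or (Formula.neg φ) χ)))}

/-- The axiom ΔC: all instances of (Δφ ∧ Δψ) → Δ(φ ∧ ψ). -/
def AxDeltaC {P : Type} : Set (Formula P) :=
  {f | ∃ φ ψ : Formula P,
     f = Formula.imp (Formula.and (Formula.delta φ) (Formula.delta ψ))
           (Formula.delta (Formula.and φ ψ))}

/-- The axiom ΔN: Δ⊤. -/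
noncomputable def AxDeltaN (P : Type) [Nonempty P] : Set (Formula P) :=
  {Formula.delta (Formula.top P)}

/-! ### Auxiliary development for the completeness proof -/

section Aux

variable {P : Type}

open Formula

/-- Tautology helper lemmas. -/
lemma taut_imp_self (φ : Formula P) : Tautology (φ.imp φ) := by
  intro v hn ha; simp only [Formula.imp, hn, ha]; cases v φ <;> rfl

lemma taut_K1 (φ ψ : Formula P) : Tautology (φ.imp (ψ.imp φ)) := by
  intro v hn ha; simp only [Formula.imp, hn, ha]; cases v φ <;> cases v ψ <;> rfl

lemma taut_K2 (ψ a b : Formula P) :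
    Tautology ((ψ.imp (a.imp b)).imp ((ψ.imp a).imp (ψ.imp b))) := by
  intro v hn ha; simp only [Formula.imp, hn, ha]
  cases v ψ <;> cases v a <;> cases v b <;> rfl

lemma taut_negIntro (φ χ : Formula P) :
    Tautology ((φ.imp χ).imp ((φ.imp χ.neg).imp φ.neg)) := by
  intro v hn ha; simp only [Formula.imp, hn, ha]
  cases v φ <;> cases v χ <;> rfl

lemma taut_andE1 (φ ψ : Formula P) : Tautology ((φ.and ψ).imp φ) := by
  intro v hn ha; simp only [Formula.imp, hn, ha]
  cases v φ <;> cases v ψ <;> rfl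

lemma taut_andE2 (φ ψ : Formula P) : Tautology ((φ.and ψ).imp ψ) := by
  intro v hn ha; simp only [Formula.imp, hn, ha]
  cases v φ <;> cases v ψ <;> rfl

lemma taut_andI (φ ψ : Formula P) : Tautology (φ.imp (ψ.imp (φ.and ψ))) := by
  intro v hn ha; simp only [Formula.imp, hn, ha]
  cases v φ <;> cases v ψ <;> rfl

lemma taut_orE (b c : Formula P) : Tautology ((b.or c).imp (b.neg.imp c)) := by
  intro v hn ha; simp only [Formula.imp, Formula.or, hn, ha]
  cases v b <;> cases v c <;> rfl

lemma taut_iffOr (φ χ : Formula P) :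
    Tautology ((φ.imp χ).imp (Formula.iffF χ (φ.or χ))) := by
  intro v hn ha; simp only [Formula.imp, Formula.or, Formula.iffF, hn, ha]
  cases v φ <;> cases v χ <;> rfl

lemma taut_distrib (φ ψ χ : Formula P) :
    Tautology (Formula.iffF ((φ.or χ).and (ψ.or χ)) ((φ.and ψ).or χ)) := by
  intro v hn ha; simp only [Formula.imp, Formula.or, Formula.iffF, hn, ha]
  cases v φ <;> cases v ψ <;> cases v χ <;> rfl

lemma taut_sep (φ χ δ : Formula P) :
    Tautology ((φ.imp (χ.neg.imp δ)).imp ((φ.imp (χ.neg.imp δ.neg)).imp (φ.imp χ))) := by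
  intro v hn ha; simp only [Formula.imp, hn, ha]
  cases v φ <;> cases v χ <;> cases v δ <;> rfl

/-- Monotonicity of derivability in the premise set. -/
lemma DerivFrom.mono {Ax Γ Γ' : Set (Formula P)} {φ : Formula P}
    (h : DerivFrom Ax Γ φ) (hsub : Γ ⊆ Γ') : DerivFrom Ax Γ' φ := by
  induction h with
  | mem h => exact .mem (hsub h)
  | thm h => exact .thm h
  | mp _ _ ih1 ih2 => exact .mp ih1 ih2

/-- Compactness of derivability. -/
lemma DerivFrom.finite {Ax Γ : Set (Formula P)} {φ : Formula P}
    (h : DerivFrom Ax Γ φ) : ∃ Γ₀ ⊆ Γ, Γ₀.Finite ∧ DerivFrom Ax Γ₀ φ := by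
  induction h with
  | @mem φ h => exact ⟨{φ}, Set.singleton_subset_iff.2 h, Set.finite_singleton _, .mem rfl⟩
  | thm h => exact ⟨∅, Set.empty_subset _, Set.finite_empty, .thm h⟩
  | mp _ _ ih1 ih2 =>
    obtain ⟨Γ₁, hs1, hf1, hd1⟩ := ih1
    obtain ⟨Γ₂, hs2, hf2, hd2⟩ := ih2
    exact ⟨Γ₁ ∪ Γ₂, Set.union_subset hs1 hs2, hf1.union hf2,
      .mp (hd1.mono Set.subset_union_left) (hd2.mono Set.subset_union_right)⟩

/-- The deduction theorem. -/
lemma deduction {Ax Γ : Set (Formula P)} {ψ φ : Formula P}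
    (h : DerivFrom Ax (insert ψ Γ) φ) : DerivFrom Ax Γ (ψ.imp φ) := by
  induction h with
  | @mem φ h =>
    rcases h with rfl | h
    · exact .thm (.taut (taut_imp_self _))
    · exact .mp (.thm (.taut (taut_K1 φ ψ))) (.mem h)
  | @thm φ h => exact .mp (.thm (.taut (taut_K1 φ ψ))) (.thm h)
  | mp _ _ ih1 ih2 => exact .mp (.mp (.thm (.taut (taut_K2 _ _ _))) ih1) ih2

lemma deriv_of_derivFrom_empty {Ax : Set (Formula P)} {φ : Formula P}
    (h : DerivFrom Ax ∅ φ) : Deriv Ax φ := by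
  induction h with
  | mem h => exact absurd h (Set.notMem_empty _)
  | thm h => exact h
  | mp _ _ ih1 ih2 => exact .mp ih1 ih2

lemma Consistent.mono {Ax Γ Γ' : Set (Formula P)} (h : Consistent Ax Γ') (hsub : Γ ⊆ Γ') :
    Consistent Ax Γ := fun ⟨φ, h1, h2⟩ => h ⟨φ, h1.mono hsub, h2.mono hsub⟩

/-- If adding `φ` yields inconsistency, then `¬φ` is derivable. -/
lemma derivFrom_neg_of_inconsistent {Ax Γ : Set (Formula P)} {φ : Formula P}
    (h : ¬ Consistent Ax (insert φ Γ)) : DerivFrom Ax Γ φ.neg := by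
  rw [Consistent, not_not] at h
  obtain ⟨χ, h1, h2⟩ := h
  exact .mp (.mp (.thm (.taut (taut_negIntro φ χ))) (deduction h1)) (deduction h2)

/-- Maximal consistent sets. -/
def MCS (Ax s : Set (Formula P)) : Prop :=
  Consistent Ax s ∧ ∀ φ : Formula P, φ ∈ s ∨ Formula.neg φ ∈ s

namespace MCS

variable {Ax s : Set (Formula P)} (hs : MCS Ax s)
include hs

lemma mem_of_deriv {φ : Formula P} (h : DerivFrom Ax s φ) : φ ∈ s := by
  rcases hs.2 φ with hm | hm
  · exact hm
  · exact absurd ⟨φ, h, .mem hm⟩ hs.1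

lemma thm_mem {φ : Formula P} (h : Deriv Ax φ) : φ ∈ s := hs.mem_of_deriv (.thm h)

lemma neg_mem_iff {φ : Formula P} : φ.neg ∈ s ↔ φ ∉ s := by
  constructor
  · intro hn hm
    exact hs.1 ⟨φ, .mem hm, .mem hn⟩
  · intro hn
    rcases hs.2 φ with hm | hm
    · exact absurd hm hn
    · exact hm

lemma mp_mem {φ ψ : Formula P} (h1 : φ.imp ψ ∈ s) (h2 : φ ∈ s) : ψ ∈ s :=
  hs.mem_of_deriv (.mp (.mem h1) (.mem h2))

lemma and_mem_iff {φ ψ : Formula P} : φ.and ψ ∈ s ↔ φ ∈ s ∧ ψ ∈ s := by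
  constructor
  · intro h
    exact ⟨hs.mp_mem (hs.thm_mem (.taut (taut_andE1 φ ψ))) h,
      hs.mp_mem (hs.thm_mem (.taut (taut_andE2 φ ψ))) h⟩
  · intro ⟨h1, h2⟩
    exact hs.mp_mem (hs.mp_mem (hs.thm_mem (.taut (taut_andI φ ψ))) h1) h2

/-- From a derivable biconditional, transfer membership. -/
lemma iff_transfer {φ ψ : Formula P} (h : Deriv Ax (Formula.iffF φ ψ)) (hm : φ ∈ s) : ψ ∈ s :=
  hs.mp_mem (hs.mp_mem (hs.thm_mem (.taut (taut_andE1 _ _))) (hs.thm_mem h)) hm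

lemma iff_transfer' {φ ψ : Formula P} (h : Deriv Ax (Formula.iffF φ ψ)) (hm : ψ ∈ s) : φ ∈ s :=
  hs.mp_mem (hs.mp_mem (hs.thm_mem (.taut (taut_andE2 _ _))) (hs.thm_mem h)) hm

end MCS

/-- Lindenbaum's lemma. -/
lemma lindenbaum {Ax Γ : Set (Formula P)} (h : Consistent Ax Γ) :
    ∃ s : Set (Formula P), Γ ⊆ s ∧ MCS Ax s := by
  have hub : ∀ c ⊆ {Γ' : Set (Formula P) | Consistent Ax Γ'},
      IsChain (· ⊆ ·) c → c.Nonempty →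
      ∃ ub ∈ {Γ' : Set (Formula P) | Consistent Ax Γ'}, ∀ s ∈ c, s ⊆ ub := by
    intro c hcS hchain hcne
    refine ⟨⋃₀ c, ?_, fun t ht => Set.subset_sUnion_of_mem ht⟩
    rintro ⟨φ, h1, h2⟩
    obtain ⟨F1, hF1s, hF1f, hd1⟩ := h1.finite
    obtain ⟨F2, hF2s, hF2f, hd2⟩ := h2.finite
    have key : ∀ F : Set (Formula P), F.Finite → F ⊆ ⋃₀ c → ∃ m ∈ c, F ⊆ m := by
      intro F hF
      refine Set.Finite.induction_on (motive := fun F _ => F ⊆ ⋃₀ c → ∃ m ∈ c, F ⊆ m) F hF ?_ ?_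
      · intro _; obtain ⟨m, hm⟩ := hcne; exact ⟨m, hm, Set.empty_subset _⟩
      · intro a F ha hFf ih hsub
        obtain ⟨m1, hm1, hm1a⟩ := hsub (Set.mem_insert _ _)
        obtain ⟨m2, hm2, hm2s⟩ := ih fun x hx => hsub (Set.mem_insert_of_mem _ hx)
        rcases eq_or_ne m1 m2 with rfl | hne
        · exact ⟨m1, hm1, Set.insert_subset hm1a hm2s⟩
        · rcases hchain hm1 hm2 hne with hle | hle
          · exact ⟨m2, hm2, Set.insert_subset (hle hm1a) hm2s⟩
          · exact ⟨m1, hm1, Set.insert_subset hm1a (hm2s.trans hle)⟩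
    obtain ⟨m, hmc, hmsub⟩ := key (F1 ∪ F2) (hF1f.union hF2f)
      (Set.union_subset hF1s hF2s)
    exact hcS hmc ⟨φ, hd1.mono (Set.subset_union_left.trans hmsub),
      hd2.mono (Set.subset_union_right.trans hmsub)⟩
  obtain ⟨M, hΓM, hMS, hmax⟩ :=
    zorn_subset_nonempty {Γ' : Set (Formula P) | Consistent Ax Γ'} hub Γ h
  refine ⟨M, hΓM, hMS, fun φ => ?_⟩
  by_contra hn
  push_neg at hn
  have h1 : DerivFrom Ax M φ.neg := by
    apply derivFrom_neg_of_inconsistent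
    intro hc
    exact hn.1 ((hmax hc (Set.subset_insert _ _)) (Set.mem_insert _ _))
  have h2 : DerivFrom Ax M φ.neg.neg := by
    apply derivFrom_neg_of_inconsistent
    intro hc
    exact hn.2 ((hmax hc (Set.subset_insert _ _)) (Set.mem_insert _ _))
  exact hMS ⟨φ.neg, h1, h2⟩

/-- Separation: a non-derivable implication is refuted by some MCS. -/
lemma deriv_imp_of_mcs {Ax : Set (Formula P)} {φ χ : Formula P}
    (h : ∀ s : Set (Formula P), MCS Ax s → φ ∈ s → χ ∈ s) : Deriv Ax (φ.imp χ) := by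
  by_cases hc : Consistent Ax (insert χ.neg (insert φ (∅ : Set (Formula P))))
  · exfalso
    obtain ⟨s, hsub, hmcs⟩ := lindenbaum hc
    have hφ : φ ∈ s := hsub (Set.mem_insert_of_mem _ (Set.mem_insert _ _))
    have hχn : χ.neg ∈ s := hsub (Set.mem_insert _ _)
    exact (hmcs.neg_mem_iff.1 hχn) (h s hmcs hφ)
  · rw [Consistent, not_not] at hc
    obtain ⟨δ, h1, h2⟩ := hc
    have d1 : DerivFrom Ax ∅ (φ.imp (χ.neg.imp δ)) := deduction (deduction h1)
    have d2 : DerivFrom Ax ∅ (φ.imp (χ.neg.imp δ.neg)) := deduction (deduction h2)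
    exact deriv_of_derivFrom_empty (.mp (.mp (.thm (.taut (taut_sep φ χ δ))) d1) d2)

end Aux

/-! ### The canonical model for R^Δ -/

section Canonical

variable {P : Type}

/-- The axiom set of R^Δ. -/
abbrev RAx (P : Type) : Set (Formula P) := AxDeltaM ∪ AxDeltaC

/-- Canonical states: maximal R^Δ-consistent sets. -/
def CanS (P : Type) := {s : Set (Formula P) // MCS (RAx P) s}

/-- The proof set of a formula. -/
def proofSet (φ : Formula P) : Set (CanS P) := {s | φ ∈ s.1}

/-- The canonical neighborhood function. -/
def canN (s : CanS P) : Set (Set (CanS P)) :=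
  {X | ∃ φ : Formula P, Formula.delta φ ∈ s.1 ∧
    (∀ ψ, Formula.delta (φ.or ψ) ∈ s.1) ∧ proofSet φ ⊆ X}

lemma proofSet_neg (φ : Formula P) : proofSet (Formula.neg φ) = (proofSet φ)ᶜ := by
  ext s; exact s.2.neg_mem_iff

lemma proofSet_subset_imp {φ χ : Formula P} (h : proofSet φ ⊆ proofSet χ) :
    Deriv (RAx P) (φ.imp χ) :=
  deriv_imp_of_mcs fun s hs hφ => h (a := ⟨s, hs⟩) hφ

lemma delta_mem_of_witness {s : CanS P} {χ φ : Formula P}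
    (h1 : ∀ ψ, Formula.delta (φ.or ψ) ∈ s.1) (h2 : Deriv (RAx P) (φ.imp χ)) :
    Formula.delta χ ∈ s.1 :=
  s.2.iff_transfer' (Deriv.re (Deriv.mp (.taut (taut_iffOr φ χ)) h2)) (h1 χ)

lemma delta_mem_of_canN {s : CanS P} {χ : Formula P}
    (h : proofSet χ ∈ canN s ∨ (proofSet χ)ᶜ ∈ canN s) : Formula.delta χ ∈ s.1 := by
  rcases h with ⟨φ, hδ, hall, hsub⟩ | ⟨φ, hδ, hall, hsub⟩
  · exact delta_mem_of_witness hall (proofSet_subset_imp hsub)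
  · rw [← proofSet_neg] at hsub
    exact s.2.iff_transfer' (Deriv.equ χ)
      (delta_mem_of_witness hall (proofSet_subset_imp hsub))

lemma canN_cases {s : CanS P} {χ : Formula P} (h : Formula.delta χ ∈ s.1) :
    proofSet χ ∈ canN s ∨ (proofSet χ)ᶜ ∈ canN s := by
  by_cases hall : ∀ ψ, Formula.delta (χ.or ψ) ∈ s.1
  · exact Or.inl ⟨χ, h, hall, subset_rfl⟩
  · push_neg at hall
    obtain ⟨ψ₀, hψ₀⟩ := hall
    have hnb : (Formula.delta (χ.or ψ₀)).neg ∈ s.1 := s.2.neg_mem_iff.2 hψ₀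
    refine Or.inr ?_
    rw [← proofSet_neg]
    refine ⟨χ.neg, s.2.iff_transfer (Deriv.equ χ) h, fun ψ => ?_, subset_rfl⟩
    have hax : Deriv (RAx P) ((Formula.delta χ).imp
        ((Formula.delta (χ.or ψ₀)).or (Formula.delta (χ.neg.or ψ)))) :=
      Deriv.ax (Set.mem_union_left _ ⟨χ, ψ₀, ψ, rfl⟩)
    have hor := s.2.mp_mem (s.2.thm_mem hax) h
    exact s.2.mp_mem (s.2.mp_mem (s.2.thm_mem (.taut (taut_orE _ _))) hor) hnb

lemma canN_superset (s : CanS P) :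
    ∀ X Y : Set (CanS P), X ∈ canN s → X ⊆ Y → Y ∈ canN s := by
  rintro X Y ⟨φ, h1, h2, h3⟩ hXY
  exact ⟨φ, h1, h2, h3.trans hXY⟩

lemma canN_inter (s : CanS P) :
    ∀ X Y : Set (CanS P), X ∈ canN s → Y ∈ canN s → X ∩ Y ∈ canN s := by
  rintro X Y ⟨φ, hφδ, hφall, hφsub⟩ ⟨ψ, hψδ, hψall, hψsub⟩
  refine ⟨φ.and ψ, ?_, ?_, ?_⟩
  · have hax : Deriv (RAx P) (((Formula.delta φ).and (Formula.delta ψ)).imp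
        (Formula.delta (φ.and ψ))) := Deriv.ax (Set.mem_union_right _ ⟨φ, ψ, rfl⟩)
    exact s.2.mp_mem (s.2.thm_mem hax) (s.2.and_mem_iff.2 ⟨hφδ, hψδ⟩)
  · intro χ
    have hax : Deriv (RAx P) (((Formula.delta (φ.or χ)).and (Formula.delta (ψ.or χ))).imp
        (Formula.delta ((φ.or χ).and (ψ.or χ)))) :=
      Deriv.ax (Set.mem_union_right _ ⟨_, _, rfl⟩)
    have h1 : Formula.delta ((φ.or χ).and (ψ.or χ)) ∈ s.1 :=
      s.2.mp_mem (s.2.thm_mem hax) (s.2.and_mem_iff.2 ⟨hφall χ, hψall χ⟩)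
    exact s.2.iff_transfer (Deriv.re (.taut (taut_distrib φ ψ χ))) h1
  · intro t ht
    have := t.2.and_mem_iff.1 ht
    exact ⟨hφsub this.1, hψsub this.2⟩

/-- The canonical model. -/
def canModel (P : Type) (h : Nonempty (CanS P)) : NbhdModel P where
  S := CanS P
  nonempty := h
  N := canN
  V := fun p => proofSet (Formula.atom p)

/-- The truth lemma. -/
lemma truthLemma (h : Nonempty (CanS P)) (φ : Formula P) :
    (canModel P h).truthSet φ = proofSet φ := by
  induction φ with
  | atom p => rfl
  | neg φ ih =>
    show ((canModel P h).truthSet φ)ᶜ = _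
    rw [ih]; exact (proofSet_neg φ).symm
  | and φ ψ ih1 ih2 =>
    show (canModel P h).truthSet φ ∩ (canModel P h).truthSet ψ = _
    rw [ih1, ih2]
    ext t
    exact (Iff.symm t.2.and_mem_iff)
  | delta φ ih =>
    ext t
    show (canModel P h).truthSet φ ∈ canN t ∨ ((canModel P h).truthSet φ)ᶜ ∈ canN t ↔
      Formula.delta φ ∈ t.1
    rw [ih]
    exact ⟨delta_mem_of_canN, canN_cases⟩

end Canonical

/-- the regular contingency logic R^Δ = E^Δ + ΔM + ΔC is strongly
complete with respect to the class of quasi-filters, i.e. (mc)-frames. -/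
theorem R_strongly_complete {P : Type} [Nonempty P]
    (Γ : Set (Formula P)) (hcon : Consistent (AxDeltaM ∪ AxDeltaC) Γ) :
    ∃ (M : NbhdModel P) (s : M.S),
      SupersetClosed M.N ∧ InterClosed M.N ∧ ∀ φ ∈ Γ, M.sat s φ := by
  obtain ⟨s, hΓs, hmcs⟩ := lindenbaum hcon
  have hne : Nonempty (CanS P) := ⟨⟨s, hmcs⟩⟩
  refine ⟨canModel P hne, ⟨s, hmcs⟩, canN_superset, canN_inter, ?_⟩
  intro φ hφ
  show _ ∈ (canModel P hne).truthSet φ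
  rw [truthLemma]
  exact hΓs hφ
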